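/- arXiv:2405.19368 — 2 statements merged into one kernel-verified Lean document; each statement's English description precedes it below -/
import Mathlib

section
/- For any x ≥ 1, x^(-1/x) Γ(1/x) ≤ Γ(x, 1/x) ≤ x^x Γ(x), with reversed inequalities if 0 < x ≤ 1. -/
open Real Set intervalIntegral MeasureTheory

lemma exp_neg_image : (fun s : ℝ => Real.exp (-s)) '' Ioi 0 = Ioo (0:ℝ) 1 := by
  ext t
  constructor
  · rintro ⟨s, hs, rfl⟩
    exact ⟨Real.exp_pos _, Real.exp_lt_one_iff.mpr (by simpa using hs)⟩
  · rintro ⟨h0, h1⟩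
    exact ⟨-Real.log t, by simpa using Real.log_neg h0 h1, by simp [Real.exp_log h0]⟩

lemma exp_neg_deriv (s : ℝ) : HasDerivWithinAt (fun s : ℝ => Real.exp (-s))
    (-Real.exp (-s)) (Ioi 0) s := by
  have := ((Real.hasDerivAt_exp (-s)).comp s (hasDerivAt_neg s)).hasDerivWithinAt (s := Ioi 0)
  simpa [mul_comm, Function.comp_def] using this

lemma exp_neg_inj : InjOn (fun s : ℝ => Real.exp (-s)) (Ioi 0) :=
  (Real.exp_injective.comp neg_injective).injOn

lemma smul_eq_on {a c : ℝ} : ∀ s ∈ Ioi (0:ℝ),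
    |(-Real.exp (-s))| • ((-Real.log (Real.exp (-s))) ^ (a-1) * (Real.exp (-s)) ^ (c-1))
      = s ^ (a-1) * Real.exp (-(c*s)) := by
  intro s _
  rw [abs_neg, abs_of_pos (Real.exp_pos _), Real.log_exp, neg_neg, smul_eq_mul,
    Real.rpow_def_of_pos (Real.exp_pos _), Real.log_exp, ← mul_assoc, mul_comm (Real.exp (-s)),
    mul_assoc, ← Real.exp_add]
  ring_nf

lemma aux_int {a c : ℝ} (ha : 0 < a) (hc : 0 < c) :
    IntegrableOn (fun s : ℝ => s ^ (a-1) * Real.exp (-(c*s))) (Ioi 0) := by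
  have := integrableOn_rpow_mul_exp_neg_mul_rpow (by linarith : (-1:ℝ) < a - 1) (p := 1) one_pos hc
  exact this.congr_fun (fun x _ => by dsimp only; rw [Real.rpow_one]; ring_nf) measurableSet_Ioi

lemma key_integrable {a c : ℝ} (ha : 0 < a) (hc : 0 < c) :
    IntegrableOn (fun t : ℝ => (-Real.log t) ^ (a-1) * t ^ (c-1)) (Ioo 0 1) := by
  rw [← exp_neg_image,
    integrableOn_image_iff_integrableOn_abs_deriv_smul measurableSet_Ioi
      (fun s _ => exp_neg_deriv s) exp_neg_inj]
  exact (aux_int ha hc).congr_fun (fun s hs => (smul_eq_on s hs).symm) measurableSet_Ioi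

lemma key_integral {a c : ℝ} (ha : 0 < a) (hc : 0 < c) :
    ∫ t in Ioo (0:ℝ) 1, (-Real.log t) ^ (a-1) * t ^ (c-1) = (1/c) ^ a * Real.Gamma a := by
  rw [← exp_neg_image,
    integral_image_eq_integral_abs_deriv_smul measurableSet_Ioi
      (fun s _ => exp_neg_deriv s) exp_neg_inj,
    setIntegral_congr_fun measurableSet_Ioi smul_eq_on]
  exact Real.integral_rpow_mul_exp_neg_mul_Ioi ha hc

lemma refl_image : (fun t : ℝ => 1 - t) '' Ioo 0 1 = Ioo (0:ℝ) 1 := by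
  rw [show (fun t : ℝ => 1 - t) = (fun t : ℝ => (1:ℝ) - t) from rfl, Set.image_const_sub_Ioo]
  norm_num

lemma refl_deriv : ∀ t ∈ Ioo (0:ℝ) 1,
    HasDerivWithinAt (fun t : ℝ => 1 - t) (-1) (Ioo (0:ℝ) 1) t :=
  fun t _ => (((hasDerivAt_id t).const_sub 1).hasDerivWithinAt)

lemma refl_inj : InjOn (fun t : ℝ => 1 - t) (Ioo (0:ℝ) 1) :=
  fun a _ b _ h => by dsimp at h; linarith

lemma refl_int_eq (g : ℝ → ℝ) :
    ∫ t in Ioo (0:ℝ) 1, g (1 - t) = ∫ t in Ioo (0:ℝ) 1, g t := by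
  conv_rhs => rw [← refl_image]
  rw [integral_image_eq_integral_abs_deriv_smul measurableSet_Ioo refl_deriv refl_inj g]
  simp

lemma refl_integrable {g : ℝ → ℝ} (h : IntegrableOn g (Ioo (0:ℝ) 1)) :
    IntegrableOn (fun t => g (1 - t)) (Ioo (0:ℝ) 1) := by
  rw [← refl_image] at h
  rw [integrableOn_image_iff_integrableOn_abs_deriv_smul measurableSet_Ioo refl_deriv
    refl_inj g] at h
  exact h.congr_fun (fun t _ => by simp) measurableSet_Ioo

lemma f_meas (a b : ℝ) : AEStronglyMeasurable
    (fun t : ℝ => (-Real.log t) ^ a * (-Real.log (1 - t)) ^ b)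
    (volume.restrict (Ioo (0:ℝ) 1)) := by
  apply ContinuousOn.aestronglyMeasurable _ measurableSet_Ioo
  apply ContinuousOn.mul
  · apply ContinuousOn.rpow_const
    · exact (Real.continuousOn_log.mono (fun t ht => ne_of_gt ht.1)).neg
    · intro t ht
      exact Or.inl (ne_of_gt (neg_pos.mpr (Real.log_neg ht.1 ht.2)))
  · apply ContinuousOn.rpow_const
    · refine ContinuousOn.neg ?_
      refine Real.continuousOn_log.comp (continuous_const.sub continuous_id).continuousOn ?_
      intro t ht
      rcases ht with ⟨_, ht2⟩
      have : (1:ℝ) - t ≠ 0 := by intro h; linarith [sub_eq_zero.mp h]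
      simpa using this
    · intro t ht
      exact Or.inl (ne_of_gt (neg_pos.mpr
        (Real.log_neg (by linarith [ht.2]) (by linarith [ht.1]))))

lemma facts {t : ℝ} (ht : t ∈ Ioo (0:ℝ) 1) :
    0 < -Real.log t ∧ 0 < -Real.log (1 - t) ∧ 1 - t ≤ -Real.log t ∧ t ≤ -Real.log (1 - t) := by
  obtain ⟨ht0, ht1⟩ := ht
  have h1t : (0:ℝ) < 1 - t := by linarith
  have h1 := Real.log_neg ht0 ht1
  have h2 := Real.log_neg h1t (by linarith)
  have h3 := Real.log_le_sub_one_of_pos ht0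
  have h4 := Real.log_le_sub_one_of_pos h1t
  exact ⟨by linarith, by linarith, by linarith, by linarith⟩

noncomputable def biGamma (x y : ℝ) : ℝ :=
  ∫ t in (0:ℝ)..1, (-Real.log t) ^ (x - 1) * (-Real.log (1 - t)) ^ (y - 1)

lemma biGamma_eq (x y : ℝ) : biGamma x y =
    ∫ t in Ioo (0:ℝ) 1, (-Real.log t) ^ (x - 1) * (-Real.log (1 - t)) ^ (y - 1) := by
  rw [biGamma, intervalIntegral.integral_of_le zero_le_one,
    MeasureTheory.integral_Ioc_eq_integral_Ioo]

theorem biGamma_inv (x : ℝ) :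
    (1 ≤ x → x ^ (-(1:ℝ)/x) * Real.Gamma (1/x) ≤ biGamma x (1/x) ∧
      biGamma x (1/x) ≤ x ^ x * Real.Gamma x) ∧
    (0 < x → x ≤ 1 → biGamma x (1/x) ≤ x ^ (-(1:ℝ)/x) * Real.Gamma (1/x) ∧
      x ^ x * Real.Gamma x ≤ biGamma x (1/x)) := by
  have main : ∀ hx0 : 0 < x,
      (1 ≤ x → x ^ (-(1:ℝ)/x) * Real.Gamma (1/x) ≤ biGamma x (1/x) ∧
        biGamma x (1/x) ≤ x ^ x * Real.Gamma x) ∧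
      (x ≤ 1 → biGamma x (1/x) ≤ x ^ (-(1:ℝ)/x) * Real.Gamma (1/x) ∧
        x ^ x * Real.Gamma x ≤ biGamma x (1/x)) := by
    intro hx0
    have hc : (0:ℝ) < 1/x := by positivity
    set f : ℝ → ℝ := fun t => (-Real.log t) ^ (x-1) * (-Real.log (1-t)) ^ (1/x-1) with hf
    set U : ℝ → ℝ := fun t => (-Real.log t) ^ (x-1) * t ^ (1/x-1) with hU
    set L : ℝ → ℝ := fun t => (-Real.log (1-t)) ^ (1/x-1) * (1-t) ^ (x-1) with hL
    have hbg : biGamma x (1/x) = ∫ t in Ioo (0:ℝ) 1, f t := biGamma_eq x (1/x)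
    have hU_int : IntegrableOn U (Ioo 0 1) := key_integrable hx0 hc
    have hU_val : ∫ t in Ioo (0:ℝ) 1, U t = x ^ x * Real.Gamma x := by
      rw [hU, key_integral hx0 hc, one_div_one_div]
    have hL_int : IntegrableOn L (Ioo 0 1) := by
      have := refl_integrable (key_integrable hc hx0)
      exact this
    have hL_val : ∫ t in Ioo (0:ℝ) 1, L t = x ^ (-(1:ℝ)/x) * Real.Gamma (1/x) := by
      have h1 : ∫ t in Ioo (0:ℝ) 1, L t
          = ∫ t in Ioo (0:ℝ) 1, (-Real.log t) ^ (1/x-1) * t ^ (x-1) :=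
        refl_int_eq (fun t => (-Real.log t) ^ (1/x-1) * t ^ (x-1))
      rw [h1, key_integral hc hx0]
      congr 1
      rw [neg_div, Real.rpow_neg hx0.le, one_div, Real.inv_rpow hx0.le]
    have hmeas : AEStronglyMeasurable f (volume.restrict (Ioo (0:ℝ) 1)) := f_meas _ _
    have hf_nonneg : ∀ t ∈ Ioo (0:ℝ) 1, 0 ≤ f t := by
      intro t ht
      obtain ⟨h1, h2, _, _⟩ := facts ht
      exact mul_nonneg (Real.rpow_nonneg h1.le _) (Real.rpow_nonneg h2.le _)
    constructor
    · intro hx1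
      have he1 : (0:ℝ) ≤ x - 1 := by linarith
      have he2 : 1/x - 1 ≤ 0 := by
        have : 1/x ≤ 1 := by rw [div_le_one hx0]; exact hx1
        linarith
      have hpt2 : ∀ t ∈ Ioo (0:ℝ) 1, f t ≤ U t := by
        intro t ht
        obtain ⟨h1, h2, hA, hB⟩ := facts ht
        exact mul_le_mul_of_nonneg_left
          (Real.rpow_le_rpow_of_nonpos ht.1 hB he2) (Real.rpow_nonneg h1.le _)
      have hpt1 : ∀ t ∈ Ioo (0:ℝ) 1, L t ≤ f t := by
        intro t ht
        obtain ⟨h1, h2, hA, hB⟩ := facts ht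
        have h1t : (0:ℝ) ≤ 1 - t := by linarith [ht.2]
        rw [hf]; dsimp only; rw [mul_comm]
        exact mul_le_mul_of_nonneg_left
          (Real.rpow_le_rpow h1t hA he1) (Real.rpow_nonneg h2.le _)
      have hf_int : IntegrableOn f (Ioo 0 1) := by
        refine hU_int.mono' hmeas ?_
        refine (ae_restrict_iff' measurableSet_Ioo).mpr (ae_of_all _ fun t ht => ?_)
        rw [Real.norm_eq_abs, abs_of_nonneg (hf_nonneg t ht)]
        exact hpt2 t ht
      constructor
      · rw [hbg, ← hL_val]
        exact setIntegral_mono_on hL_int hf_int measurableSet_Ioo hpt1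
      · rw [hbg, ← hU_val]
        exact setIntegral_mono_on hf_int hU_int measurableSet_Ioo hpt2
    · intro hx1
      have he1 : x - 1 ≤ 0 := by linarith
      have he2 : (0:ℝ) ≤ 1/x - 1 := by
        have : (1:ℝ) ≤ 1/x := by rw [le_div_iff₀ hx0]; linarith
        linarith
      have hpt2 : ∀ t ∈ Ioo (0:ℝ) 1, U t ≤ f t := by
        intro t ht
        obtain ⟨h1, h2, hA, hB⟩ := facts ht
        exact mul_le_mul_of_nonneg_left
          (Real.rpow_le_rpow ht.1.le hB he2) (Real.rpow_nonneg h1.le _)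
      have hpt1 : ∀ t ∈ Ioo (0:ℝ) 1, f t ≤ L t := by
        intro t ht
        obtain ⟨h1, h2, hA, hB⟩ := facts ht
        have h1t : (0:ℝ) < 1 - t := by linarith [ht.2]
        rw [hf]; dsimp only; rw [mul_comm]
        exact mul_le_mul_of_nonneg_left
          (Real.rpow_le_rpow_of_nonpos h1t hA he1) (Real.rpow_nonneg h2.le _)
      have hf_int : IntegrableOn f (Ioo 0 1) := by
        refine hL_int.mono' hmeas ?_
        refine (ae_restrict_iff' measurableSet_Ioo).mpr (ae_of_all _ fun t ht => ?_)
        rw [Real.norm_eq_abs, abs_of_nonneg (hf_nonneg t ht)]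
        exact hpt1 t ht
      constructor
      · rw [hbg, ← hL_val]
        exact setIntegral_mono_on hf_int hL_int measurableSet_Ioo hpt1
      · rw [hbg, ← hU_val]
        exact setIntegral_mono_on hU_int hf_int measurableSet_Ioo hpt2
  constructor
  · intro hx1
    exact (main (lt_of_lt_of_le one_pos hx1)).1 hx1
  · intro hx0 hx1
    exact (main hx0).2 hx1
end

section
/- For any x ∈ (0,1), Γ(x, 1-x) ≥ e^(-Γ'(1)) = e^γ, where γ is the Euler–Mascheroni constant. -/
open Real Set intervalIntegral

open MeasureTheory Filter

local notation "γ" => Real.eulerMascheroniConstant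

lemma integrable_explog : IntegrableOn (fun u : ℝ => Real.exp (-u) * Real.log u) (Ioi 0) := by
  have h1 := Real.GammaIntegral_convergent (s := 1/2) (by norm_num)
  have h2 := Real.GammaIntegral_convergent (s := 2) (by norm_num)
  have hbound : IntegrableOn
      (fun u : ℝ => 2 * (Real.exp (-u) * u ^ ((1:ℝ)/2 - 1)) + Real.exp (-u) * u ^ ((2:ℝ) - 1))
      (Ioi 0) := (h1.const_mul 2).add h2
  refine Integrable.mono hbound ?_ ?_
  · apply ContinuousOn.aestronglyMeasurable ?_ measurableSet_Ioi
    exact ((Real.continuous_exp.comp continuous_neg).continuousOn).mul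
      (Real.continuousOn_log.mono (fun u hu => ne_of_gt hu))
  · rw [ae_restrict_iff' measurableSet_Ioi]
    filter_upwards with u hu
    have hu0 : (0:ℝ) < u := hu
    have hlog : |Real.log u| ≤ 2 * u ^ ((1:ℝ)/2 - 1) + u ^ ((2:ℝ)-1) := by
      have hs : (0:ℝ) < u ^ ((1:ℝ)/2 - 1) := Real.rpow_pos_of_pos hu0 _
      have h12 : -((1:ℝ)/2) * Real.log u ≤ u ^ (-((1:ℝ)/2)) := by
        have := Real.log_le_sub_one_of_pos (Real.rpow_pos_of_pos hu0 (-((1:ℝ)/2)))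
        rw [Real.log_rpow hu0] at this
        linarith
      have heq : u ^ (-((1:ℝ)/2)) = u ^ ((1:ℝ)/2 - 1) := by norm_num
      rw [heq] at h12
      have hup : Real.log u ≤ u ^ ((2:ℝ)-1) := by
        rw [show ((2:ℝ)-1) = 1 by norm_num, Real.rpow_one]
        linarith [Real.log_le_sub_one_of_pos hu0]
      have hs2 : (0:ℝ) ≤ u ^ ((2:ℝ)-1) := (Real.rpow_pos_of_pos hu0 _).le
      set a := u ^ ((1:ℝ)/2 - 1) with ha
      set b := u ^ ((2:ℝ)-1) with hb
      rw [abs_le]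
      constructor <;> linarith
    have hb : ‖Real.exp (-u) * Real.log u‖
        ≤ 2 * (Real.exp (-u) * u ^ ((1:ℝ)/2 - 1)) + Real.exp (-u) * u ^ ((2:ℝ) - 1) := by
      rw [norm_mul, Real.norm_eq_abs, Real.norm_eq_abs, abs_of_pos (Real.exp_pos _)]
      calc Real.exp (-u) * |Real.log u|
          ≤ Real.exp (-u) * (2 * u ^ ((1:ℝ)/2 - 1) + u ^ ((2:ℝ)-1)) := by
            exact mul_le_mul_of_nonneg_left hlog (Real.exp_pos _).le
        _ = 2 * (Real.exp (-u) * u ^ ((1:ℝ)/2 - 1)) + Real.exp (-u) * u ^ ((2:ℝ) - 1) := by ring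
    refine hb.trans (le_abs_self _)

lemma integral_explog : ∫ u in Ioi (0:ℝ), Real.exp (-u) * Real.log u = -γ := by
  have hC : HasDerivAt Complex.GammaIntegral
      (∫ t : ℝ in Ioi 0, (t:ℂ) ^ ((1:ℂ) - 1) * (Real.log t * Real.exp (-t))) 1 :=
    Complex.hasDerivAt_GammaIntegral (by norm_num)
  have hval : (∫ t : ℝ in Ioi 0, (t:ℂ) ^ ((1:ℂ) - 1) * (Real.log t * Real.exp (-t)))
      = ((∫ u in Ioi (0:ℝ), Real.exp (-u) * Real.log u : ℝ) : ℂ) := by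
    rw [show ((∫ u in Ioi (0:ℝ), Real.exp (-u) * Real.log u : ℝ) : ℂ)
        = ∫ u in Ioi (0:ℝ), ((Real.exp (-u) * Real.log u : ℝ) : ℂ) from integral_ofReal.symm]
    apply MeasureTheory.integral_congr_ae
    filter_upwards with t
    rw [sub_self, Complex.cpow_zero]
    push_cast
    ring
  rw [hval] at hC
  have hG : HasDerivAt Complex.Gamma
      (((∫ u in Ioi (0:ℝ), Real.exp (-u) * Real.log u : ℝ) : ℂ)) 1 := by
    refine hC.congr_of_eventuallyEq ?_
    have : {s : ℂ | 0 < s.re} ∈ nhds (1 : ℂ) := by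
      refine IsOpen.mem_nhds (isOpen_lt continuous_const Complex.continuous_re) (by norm_num)
    filter_upwards [this] with s hs
    exact Complex.Gamma_eq_integral hs
  have hR : HasDerivAt Real.Gamma (∫ u in Ioi (0:ℝ), Real.exp (-u) * Real.log u) 1 := by
    have := hG.real_of_complex
    simpa [Complex.Gamma_ofReal] using this
  have := hR.unique Real.hasDerivAt_Gamma_one
  linarith

lemma expneg_hasDeriv : ∀ u ∈ Ioi (0:ℝ),
    HasDerivWithinAt (fun u : ℝ => Real.exp (-u)) (-Real.exp (-u)) (Ioi 0) u := by
  intro u _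
  have h : HasDerivAt (fun u : ℝ => Real.exp (-u)) (Real.exp (-u) * -1) u :=
    (Real.hasDerivAt_exp (-u)).comp u (hasDerivAt_neg u)
  simpa [mul_comm] using h.hasDerivWithinAt

lemma expneg_inj : InjOn (fun u : ℝ => Real.exp (-u)) (Ioi 0) := by
  intro a _ b _ h
  have := Real.exp_injective h
  linarith

lemma expneg_image : (fun u : ℝ => Real.exp (-u)) '' (Ioi 0) = Ioo 0 1 := by
  ext t
  constructor
  · rintro ⟨u, hu, rfl⟩
    have hu0 : (0:ℝ) < u := hu
    refine ⟨Real.exp_pos _, ?_⟩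
    rw [Real.exp_lt_one_iff]
    linarith
  · intro ht
    refine ⟨-Real.log t, ?_, ?_⟩
    · have := Real.log_neg ht.1 ht.2
      simpa using this
    · show Real.exp (-(-Real.log t)) = t
      rw [neg_neg, Real.exp_log ht.1]

lemma loglog_fun_eq : (fun u : ℝ => |(-Real.exp (-u))| • Real.log (-Real.log (Real.exp (-u))))
    = fun u : ℝ => Real.exp (-u) * Real.log u := by
  funext u
  rw [abs_neg, abs_of_pos (Real.exp_pos _), Real.log_exp, neg_neg, smul_eq_mul]

lemma integrable_loglog : IntegrableOn (fun t : ℝ => Real.log (-Real.log t)) (Ioo 0 1) := by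
  rw [← expneg_image,
    integrableOn_image_iff_integrableOn_abs_deriv_smul measurableSet_Ioi expneg_hasDeriv
      expneg_inj (fun t : ℝ => Real.log (-Real.log t)), loglog_fun_eq]
  exact integrable_explog

lemma integral_loglog : ∫ t in Ioo (0:ℝ) 1, Real.log (-Real.log t) = -γ := by
  rw [← expneg_image,
    integral_image_eq_integral_abs_deriv_smul measurableSet_Ioi expneg_hasDeriv
      expneg_inj (fun t : ℝ => Real.log (-Real.log t)), loglog_fun_eq]
  exact integral_explog

lemma reflect_hasDeriv : ∀ u ∈ Ioo (0:ℝ) 1,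
    HasDerivWithinAt (fun t : ℝ => 1 - t) (-1 : ℝ) (Ioo 0 1) u := by
  intro u _
  simpa using ((hasDerivAt_id u).const_sub 1).hasDerivWithinAt

lemma reflect_inj : InjOn (fun t : ℝ => 1 - t) (Ioo 0 1) := by
  intro a _ b _ h
  simp only at h; linarith

lemma reflect_image : (fun t : ℝ => 1 - t) '' (Ioo 0 1) = Ioo 0 1 := by
  rw [Set.image_const_sub_Ioo]; norm_num

lemma integrable_loglog' : IntegrableOn (fun t : ℝ => Real.log (-Real.log (1 - t))) (Ioo 0 1) := by
  have h := (integrableOn_image_iff_integrableOn_abs_deriv_smul measurableSet_Ioo reflect_hasDeriv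
      reflect_inj (fun t : ℝ => Real.log (-Real.log t))).mp (by rw [reflect_image]; exact integrable_loglog)
  simpa using h

lemma integral_loglog' : ∫ t in Ioo (0:ℝ) 1, Real.log (-Real.log (1 - t)) = -γ := by
  have h := integral_image_eq_integral_abs_deriv_smul measurableSet_Ioo reflect_hasDeriv
      reflect_inj (fun t : ℝ => Real.log (-Real.log t))
  rw [reflect_image, integral_loglog] at h
  simpa using h.symm

lemma integrable_beta {x : ℝ} (hx0 : 0 < x) (hx1 : x < 1) :
    IntegrableOn (fun t : ℝ => (1 - t) ^ (x - 1) * t ^ (-x)) (Ioo 0 1) := by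
  have hc : IntervalIntegrable
      (fun t : ℝ => (t : ℂ) ^ ((1 - x : ℂ) - 1) * (1 - (t : ℂ)) ^ ((x : ℂ) - 1)) volume 0 1 :=
    Complex.betaIntegral_convergent (by simpa using by linarith) (by simpa using hx0)
  have hn := hc.norm
  rw [intervalIntegrable_iff_integrableOn_Ioc_of_le zero_le_one] at hn
  have hn' := hn.mono_set Ioo_subset_Ioc_self
  refine hn'.congr_fun (fun t ht => ?_) measurableSet_Ioo
  have ht0 : (0:ℝ) < t := ht.1
  have ht1 : (0:ℝ) < 1 - t := by linarith [ht.2]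
  beta_reduce
  rw [norm_mul,
    Complex.norm_cpow_eq_rpow_re_of_pos ht0,
    show (1 : ℂ) - (t : ℂ) = ((1 - t : ℝ) : ℂ) by push_cast; ring,
    Complex.norm_cpow_eq_rpow_re_of_pos ht1]
  have e1 : ((1 - x : ℂ) - 1).re = -x := by simp
  have e2 : ((x : ℂ) - 1).re = x - 1 := by simp
  rw [e1, e2, mul_comm]

theorem biGamma_reflection_ge (x : ℝ) (hx : x ∈ Set.Ioo (0:ℝ) 1) :
    Real.exp (-deriv Real.Gamma 1) ≤ biGamma x (1 - x) ∧
    Real.exp (-deriv Real.Gamma 1) = Real.exp Real.eulerMascheroniConstant := by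
  obtain ⟨hx0, hx1⟩ := hx
  have hd : -deriv Real.Gamma 1 = γ := Real.eulerMascheroniConstant_eq_neg_deriv.symm
  refine ⟨?_, by rw [hd]⟩
  rw [hd]
  set f : ℝ → ℝ := fun t => (-Real.log t) ^ (x - 1) * (-Real.log (1 - t)) ^ (1 - x - 1) with hf
  set φ : ℝ → ℝ := fun t =>
    (x - 1) * Real.log (-Real.log t) + (-x) * Real.log (-Real.log (1 - t)) with hφ
  have hint1 := integrable_loglog.const_mul (x - 1)
  have hint2 := integrable_loglog'.const_mul (-x)
  have hφint : IntegrableOn φ (Ioo 0 1) := hint1.add hint2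
  have hφval : ∫ t in Ioo (0:ℝ) 1, φ t = γ := by
    rw [hφ, integral_add hint1 hint2, MeasureTheory.integral_const_mul, MeasureTheory.integral_const_mul,
      integral_loglog, integral_loglog']
    ring
  -- pointwise facts
  have hA : ∀ t ∈ Ioo (0:ℝ) 1, 0 < -Real.log t := by
    intro t ht
    have := Real.log_neg ht.1 ht.2
    linarith
  have hB : ∀ t ∈ Ioo (0:ℝ) 1, 0 < -Real.log (1 - t) := by
    intro t ht
    have := Real.log_neg (by linarith [ht.2] : (0:ℝ) < 1 - t) (by linarith [ht.1] : 1 - t < 1)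
    linarith
  have hfe : ∀ t ∈ Ioo (0:ℝ) 1, f t = Real.exp (φ t) := by
    intro t ht
    rw [hf, hφ]
    simp only
    rw [Real.rpow_def_of_pos (hA t ht), Real.rpow_def_of_pos (hB t ht), ← Real.exp_add]
    congr 1
    ring
  have hchain : ∀ t ∈ Ioo (0:ℝ) 1,
      Real.exp γ * (1 - γ) + Real.exp γ * φ t ≤ f t := by
    intro t ht
    have h2 : Real.exp γ * (φ t - γ + 1) ≤ Real.exp (φ t) := by
      calc Real.exp γ * (φ t - γ + 1)
          ≤ Real.exp γ * Real.exp (φ t - γ) := by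
            have := Real.add_one_le_exp (φ t - γ)
            exact mul_le_mul_of_nonneg_left (by linarith) (Real.exp_pos γ).le
        _ = Real.exp (φ t) := by rw [← Real.exp_add]; congr 1; ring
    rw [hfe t ht]
    nlinarith [h2]
  -- integrability of f
  have hIf : IntegrableOn f (Ioo 0 1) := by
    refine Integrable.mono (integrable_beta hx0 hx1) ?_ ?_
    · refine ContinuousOn.aestronglyMeasurable ?_ measurableSet_Ioo
      have hl1 : ContinuousOn (fun t : ℝ => -Real.log t) (Ioo 0 1) := by
        refine (Real.continuousOn_log.mono ?_).neg
        intro t ht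
        exact ne_of_gt ht.1
      have hl2 : ContinuousOn (fun t : ℝ => -Real.log (1 - t)) (Ioo 0 1) := by
        refine ContinuousOn.neg ?_
        refine Real.continuousOn_log.comp ((continuous_const.sub continuous_id).continuousOn) ?_
        intro t ht
        have : (0:ℝ) < 1 - t := by linarith [ht.2]
        exact ne_of_gt this
      exact (hl1.rpow_const (fun t ht => Or.inl (ne_of_gt (hA t ht)))).mul
        (hl2.rpow_const (fun t ht => Or.inl (ne_of_gt (hB t ht))))
    · rw [ae_restrict_iff' measurableSet_Ioo]
      filter_upwards with t ht
      have h1t : (0:ℝ) < 1 - t := by linarith [ht.2]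
      have hle1 : (-Real.log t) ^ (x - 1) ≤ (1 - t) ^ (x - 1) := by
        refine Real.rpow_le_rpow_of_nonpos h1t ?_ (by linarith)
        linarith [Real.log_le_sub_one_of_pos ht.1]
      have hle2 : (-Real.log (1 - t)) ^ (-x) ≤ t ^ (-x) := by
        refine Real.rpow_le_rpow_of_nonpos ht.1 ?_ (by linarith)
        linarith [Real.log_le_sub_one_of_pos h1t]
      have hft : f t ≤ (1 - t) ^ (x - 1) * t ^ (-x) := by
        rw [hf]
        simp only
        rw [show (1:ℝ) - x - 1 = -x from by ring]
        exact mul_le_mul hle1 hle2 (Real.rpow_nonneg (hB t ht).le _)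
          (Real.rpow_nonneg h1t.le _)
      rw [Real.norm_eq_abs, Real.norm_eq_abs, abs_of_nonneg, abs_of_nonneg]
      · exact hft
      · exact mul_nonneg (Real.rpow_nonneg h1t.le _) (Real.rpow_nonneg ht.1.le _)
      · exact mul_nonneg (Real.rpow_nonneg (hA t ht).le _) (Real.rpow_nonneg (hB t ht).le _)
  -- lhs integral value
  have hconst : IntegrableOn (fun _ : ℝ => Real.exp γ * (1 - γ)) (Ioo 0 1) := by
    refine integrableOn_const ?_
    exact measure_Ioo_lt_top.ne
  have hlhs_int : IntegrableOn (fun t => Real.exp γ * (1 - γ) + Real.exp γ * φ t) (Ioo 0 1) :=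
    hconst.add (hφint.const_mul _)
  have h_lhs : ∫ t in Ioo (0:ℝ) 1, (Real.exp γ * (1 - γ) + Real.exp γ * φ t) = Real.exp γ := by
    rw [integral_add hconst (hφint.const_mul _), setIntegral_const, MeasureTheory.integral_const_mul, hφval,
      Real.volume_real_Ioo_of_le zero_le_one]
    simp only [smul_eq_mul]
    ring
  calc Real.exp γ = ∫ t in Ioo (0:ℝ) 1, (Real.exp γ * (1 - γ) + Real.exp γ * φ t) := h_lhs.symm
    _ ≤ ∫ t in Ioo (0:ℝ) 1, f t := setIntegral_mono_on hlhs_int hIf measurableSet_Ioo hchain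
    _ = biGamma x (1 - x) := by
        rw [biGamma, intervalIntegral.integral_of_le zero_le_one, integral_Ioc_eq_integral_Ioo]
end
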